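/- Let m, n be natural numbers with 2 ≤ m and 2m ≤ n. Then φ(m, n+1) = m · φ(m, n) + m · n · φ(m−1, n−1). -/
import Mathlib


/-- `phi m n` is the number of ways to place `n` distinct objects into `m` numbered urns
so that each urn receives at least two objects, i.e. the number of functions
`f : Fin n → Fin m` all of whose fibers have at least two elements. -/
def phi (m n : ℕ) : ℕ :=
  Fintype.card {f : Fin n → Fin m // ∀ i : Fin m, 2 ≤ (Finset.univ.filter fun x => f x = i).card}

open Finset

namespace PhiAux

variable {α β α' β' : Type*}

def fc [Fintype α] [DecidableEq β] (f : α → β) (b : β) : ℕ :=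
  (Finset.univ.filter fun x => f x = b).card

def Valid [Fintype α] [DecidableEq β] (f : α → β) : Prop :=
  ∀ b, 2 ≤ fc f b

instance [Fintype α] [Fintype β] [DecidableEq β] : DecidablePred (Valid : (α → β) → Prop) :=
  fun f => inferInstanceAs (Decidable (∀ b, 2 ≤ fc f b))

lemma phi_def (m n : ℕ) : phi m n = Fintype.card {f : Fin n → Fin m // Valid f} :=
  Fintype.card_congr (Equiv.subtypeEquivRight fun _ => Iff.rfl)

lemma fc_eq_sum [Fintype α] [DecidableEq β] (f : α → β) (b : β) :
    fc f b = ∑ x, if f x = b then 1 else 0 :=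
  Finset.card_filter _ _

lemma fc_castSucc {n m : ℕ} (f : Fin (n + 1) → Fin m) (b : Fin m) :
    fc f b = fc (Fin.init f) b + if f (Fin.last n) = b then 1 else 0 := by
  simp only [fc_eq_sum, Fin.sum_univ_castSucc]
  rfl

lemma fc_snoc {n m : ℕ} (g : Fin n → Fin m) (i b : Fin m) :
    fc (Fin.snoc g i) b = fc g b + if i = b then 1 else 0 := by
  rw [fc_castSucc]
  simp [Fin.init_snoc, Fin.snoc_last]


lemma fc_arrowCongr [Fintype α] [DecidableEq β] [Fintype α'] [DecidableEq β']
    (e : α ≃ α') (e' : β ≃ β') (f : α → β) (b' : β') :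
    fc (Equiv.arrowCongr e e' f) b' = fc f (e'.symm b') := by
  simp only [fc_eq_sum, Equiv.arrowCongr_apply, Function.comp]
  rw [← Equiv.sum_comp e.symm (fun x => if f x = e'.symm b' then 1 else 0)]
  refine Finset.sum_congr rfl fun x _ => ?_
  congr 1
  simp [Equiv.eq_symm_apply]

lemma valid_card_congr [Fintype α] [DecidableEq α] [Fintype β] [DecidableEq β]
    [Fintype α'] [DecidableEq α'] [Fintype β'] [DecidableEq β']
    (e : α ≃ α') (e' : β ≃ β') :
    Fintype.card {f : α → β // Valid f} = Fintype.card {f : α' → β' // Valid f} := by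
  apply Fintype.card_congr
  refine Equiv.subtypeEquiv (Equiv.arrowCongr e e') fun f => ⟨fun h b' => ?_, fun h b => ?_⟩
  · rw [fc_arrowCongr]; exact h _
  · have := h (e' b); rwa [fc_arrowCongr, Equiv.symm_apply_apply] at this

lemma card_valid_eq_phi (α β : Type*) [Fintype α] [DecidableEq α] [Fintype β] [DecidableEq β] :
    Fintype.card {f : α → β // Valid f} = phi (Fintype.card β) (Fintype.card α) := by
  rw [valid_card_congr (Fintype.equivFin α) (Fintype.equivFin β), phi_def]

def equivA {m n : ℕ} :
    {f : Fin (n + 1) → Fin m // Valid f ∧ 3 ≤ fc f (f (Fin.last n))} ≃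
      Fin m × {g : Fin n → Fin m // Valid g} where
  toFun f := (f.1 (Fin.last n), ⟨Fin.init f.1, by
    intro b
    have h := fc_castSucc f.1 b
    have h2 := f.2.1 b
    by_cases hb : f.1 (Fin.last n) = b
    · have h3 := f.2.2
      rw [hb] at h3
      rw [if_pos hb] at h
      omega
    · rw [if_neg hb] at h
      omega⟩)
  invFun p := ⟨Fin.snoc p.2.1 p.1, by
    refine ⟨fun b => ?_, ?_⟩
    · rw [fc_snoc]; have := p.2.2 b; omega
    · rw [Fin.snoc_last, fc_snoc, if_pos rfl]; have := p.2.2 p.1; omega⟩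
  left_inv f := Subtype.ext (Fin.snoc_init_self f.1)
  right_inv p := by
    refine Prod.ext ?_ (Subtype.ext ?_)
    · simp
    · simp

lemma cardA {m n : ℕ} :
    Fintype.card {f : Fin (n + 1) → Fin m // Valid f ∧ 3 ≤ fc f (f (Fin.last n))} =
      m * phi m n := by
  rw [Fintype.card_congr equivA, Fintype.card_prod, Fintype.card_fin, phi_def]


lemma unique_fiber {n m : ℕ} {g : Fin n → Fin m} {i : Fin m} {j : Fin n}
    (h1 : fc g i = 1) (hj : g j = i) : ∀ x, x ≠ j → g x ≠ i := by
  intro x hx hgx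
  have hsub : ({x, j} : Finset (Fin n)) ⊆ univ.filter fun y => g y = i := by
    intro y hy
    simp only [Finset.mem_insert, Finset.mem_singleton] at hy
    rcases hy with rfl | rfl <;> simp [hgx, hj]
  have hc := Finset.card_le_card hsub
  rw [Finset.card_pair hx] at hc
  have : fc g i = (univ.filter fun y => g y = i).card := rfl
  omega

lemma fiber_one {n m : ℕ} {g : Fin n → Fin m} {i : Fin m} {j : Fin n}
    (hj : g j = i) (hne : ∀ x, x ≠ j → g x ≠ i) : fc g i = 1 := by
  show (univ.filter fun y => g y = i).card = 1
  rw [Finset.card_eq_one]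
  refine ⟨j, ?_⟩
  ext x
  simp only [Finset.mem_filter, Finset.mem_univ, true_and, Finset.mem_singleton]
  constructor
  · intro h; by_contra hx; exact hne x hx h
  · rintro rfl; exact hj

lemma fc_restrict {n m : ℕ} (g : Fin n → Fin m) (j : Fin n) (b : Fin m) (hb : g j ≠ b) :
    (univ.filter fun x : {x : Fin n // x ≠ j} => g x.1 = b).card = fc g b := by
  show _ = (univ.filter fun x => g x = b).card
  refine Finset.card_bij' (fun x _ => x.1) (fun x hx => ⟨x, ?_⟩) ?_ ?_ ?_ ?_
  · rintro rfl
    exact hb (Finset.mem_filter.mp hx).2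
  · intro a ha
    simp only [Finset.mem_filter, Finset.mem_univ, true_and] at ha ⊢
    exact ha
  · intro a ha
    simp only [Finset.mem_filter, Finset.mem_univ, true_and] at ha ⊢
    exact ha
  · intro a _; rfl
  · intro a _; rfl


def equivB1 {m n : ℕ} (i : Fin m) (j : Fin n) :
    {f : Fin (n + 1) → Fin m //
        Valid f ∧ f (Fin.last n) = i ∧ f (Fin.castSucc j) = i ∧ fc f i = 2} ≃
      {g : Fin n → Fin m // (∀ b, b ≠ i → 2 ≤ fc g b) ∧ fc g i = 1 ∧ g j = i} where
  toFun f := ⟨Fin.init f.1, by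
    obtain ⟨hv, hl, hj, h2⟩ := f.2
    refine ⟨fun b hb => ?_, ?_, hj⟩
    · have h := fc_castSucc f.1 b
      rw [if_neg (fun h => hb (h.symm.trans hl))] at h
      have := hv b
      omega
    · have h := fc_castSucc f.1 i
      rw [if_pos hl] at h
      omega⟩
  invFun g := ⟨Fin.snoc g.1 i, by
    obtain ⟨hv, h1, hj⟩ := g.2
    have hsnoc : ∀ b, fc (Fin.snoc g.1 i) b = fc g.1 b + if i = b then 1 else 0 :=
      fun b => fc_snoc g.1 i b
    refine ⟨fun b => ?_, ?_, ?_, ?_⟩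
    · by_cases hb : b = i
      · subst hb; rw [hsnoc, if_pos rfl]; omega
      · rw [hsnoc, if_neg (fun h => hb h.symm)]
        have := hv b hb
        omega
    · exact Fin.snoc_last _ _
    · simpa using hj
    · rw [hsnoc, if_pos rfl]; omega⟩
  left_inv f := Subtype.ext (by
    have := Fin.snoc_init_self f.1
    rw [f.2.2.1] at this
    exact this)
  right_inv g := Subtype.ext (by simp)

def equivB2 {m n : ℕ} (i : Fin m) (j : Fin n) :
    {g : Fin n → Fin m // (∀ b, b ≠ i → 2 ≤ fc g b) ∧ fc g i = 1 ∧ g j = i} ≃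
      {h : {x : Fin n // x ≠ j} → {b : Fin m // b ≠ i} // Valid h} where
  toFun g := ⟨fun x => ⟨g.1 x.1, unique_fiber g.2.2.1 g.2.2.2 x.1 x.2⟩, by
    rintro ⟨b, hb⟩
    have key : fc (fun x : {x : Fin n // x ≠ j} =>
          (⟨g.1 x.1, unique_fiber g.2.2.1 g.2.2.2 x.1 x.2⟩ : {b : Fin m // b ≠ i})) ⟨b, hb⟩
        = (univ.filter fun x : {x : Fin n // x ≠ j} => g.1 x.1 = b).card := by
      show (univ.filter _).card = _
      congr 1
      ext x
      simp [Subtype.ext_iff]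
    rw [key, fc_restrict g.1 j b (by rw [g.2.2.2]; exact fun hh => hb hh.symm)]
    exact g.2.1 b hb⟩
  invFun h := ⟨fun x => if hx : x = j then i else (h.1 ⟨x, hx⟩).1, by
    have hgj : (fun x => if hx : x = j then i else (h.1 ⟨x, hx⟩).1) j = i := dif_pos rfl
    have hne : ∀ x, x ≠ j → (fun x => if hx : x = j then i else (h.1 ⟨x, hx⟩).1) x ≠ i := by
      intro x hx
      simp only [dif_neg hx]
      exact (h.1 ⟨x, hx⟩).2
    refine ⟨fun b hb => ?_, fiber_one hgj hne, hgj⟩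
    have key := (fc_restrict (fun x => if hx : x = j then i else (h.1 ⟨x, hx⟩).1) j b
      (by simp only [dif_pos rfl]; exact fun hh => hb hh.symm)).symm
    rw [key]
    have heq : (univ.filter fun x : {x : Fin n // x ≠ j} =>
          (fun x => if hx : x = j then i else (h.1 ⟨x, hx⟩).1) x.1 = b)
        = (univ.filter fun x : {x : Fin n // x ≠ j} => h.1 x = ⟨b, hb⟩) := by
      ext x
      simp only [Finset.mem_filter, Finset.mem_univ, true_and, dif_neg x.2, Subtype.ext_iff]
    rw [heq]
    exact h.2 ⟨b, hb⟩⟩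
  left_inv g := Subtype.ext (funext fun x => by
    by_cases hx : x = j
    · subst hx
      simp only [dif_pos rfl]
      exact g.2.2.2.symm
    · simp only [dif_neg hx])
  right_inv h := Subtype.ext (funext fun x => Subtype.ext (by simp only [dif_neg x.2]))

lemma card_ne {k : ℕ} (i : Fin (k + 1)) : Fintype.card {b : Fin (k + 1) // b ≠ i} = k := by
  have h := Fintype.card_subtype_compl (fun b : Fin (k + 1) => b = i)
  rw [Fintype.card_subtype_eq, Fintype.card_fin] at h
  exact h

lemma cardBij {M N : ℕ} (i : Fin (M + 1)) (j : Fin (N + 1)) :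
    Fintype.card {f : Fin (N + 1 + 1) → Fin (M + 1) //
        Valid f ∧ f (Fin.last (N + 1)) = i ∧ f (Fin.castSucc j) = i ∧ fc f i = 2}
      = phi M N := by
  rw [Fintype.card_congr ((equivB1 i j).trans (equivB2 i j)), card_valid_eq_phi,
    card_ne i, card_ne j]

lemma cardB {M N : ℕ} :
    Fintype.card {f : Fin (N + 1 + 1) → Fin (M + 1) //
        Valid f ∧ fc f (f (Fin.last (N + 1))) = 2}
      = (M + 1) * ((N + 1) * phi M N) := by
  have step1 : ∀ f : Fin (N + 1 + 1) → Fin (M + 1),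
      (Valid f ∧ fc f (f (Fin.last (N + 1))) = 2) →
      (∑ p : Fin (M + 1) × Fin (N + 1),
        if f (Fin.last (N + 1)) = p.1 ∧ f (Fin.castSucc p.2) = p.1 then 1 else 0) = 1 := by
    intro f hf
    have h := fc_castSucc f (f (Fin.last (N + 1)))
    rw [if_pos rfl] at h
    have h2 := hf.2
    have h1 : fc (Fin.init f) (f (Fin.last (N + 1))) = 1 := by omega
    rw [Fintype.sum_prod_type]
    rw [Finset.sum_eq_single (f (Fin.last (N + 1)))
      (fun b _ hb => Finset.sum_eq_zero fun j _ => if_neg (fun hc => hb hc.1.symm))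
      (fun habs => absurd (Finset.mem_univ _) habs)]
    calc (∑ j : Fin (N + 1),
          if f (Fin.last (N + 1)) = f (Fin.last (N + 1)) ∧
              f (Fin.castSucc j) = f (Fin.last (N + 1)) then 1 else 0)
        = ∑ j : Fin (N + 1), if Fin.init f j = f (Fin.last (N + 1)) then 1 else 0 := by
          refine Finset.sum_congr rfl fun j _ => ?_
          congr 1
          simp [Fin.init]
      _ = 1 := by rw [← fc_eq_sum]; exact h1
  classical
  have step2 : ∀ p : Fin (M + 1) × Fin (N + 1), p ∈ (univ : Finset (Fin (M + 1) × Fin (N + 1))) →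
      (∑ f ∈ univ.filter (fun f : Fin (N + 1 + 1) → Fin (M + 1) =>
          Valid f ∧ fc f (f (Fin.last (N + 1))) = 2),
        if f (Fin.last (N + 1)) = p.1 ∧ f (Fin.castSucc p.2) = p.1 then 1 else 0) = phi M N := by
    intro p _
    rw [← Finset.card_filter, Finset.filter_filter]
    rw [← Fintype.card_subtype]
    rw [Fintype.card_congr (Equiv.subtypeEquivRight (q := fun f : Fin (N + 1 + 1) → Fin (M + 1) =>
      Valid f ∧ f (Fin.last (N + 1)) = p.1 ∧ f (Fin.castSucc p.2) = p.1 ∧ fc f p.1 = 2)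
      (fun f => by
        constructor
        · rintro ⟨⟨hv, h2⟩, hl, hj⟩
          exact ⟨hv, hl, hj, by rw [← hl]; exact h2⟩
        · rintro ⟨hv, hl, hj, h2⟩
          exact ⟨⟨hv, by rw [hl]; exact h2⟩, hl, hj⟩))]
    exact cardBij p.1 p.2
  rw [Fintype.card_subtype, Finset.card_eq_sum_ones,
    Finset.sum_congr rfl (fun f hf => (step1 f (Finset.mem_filter.mp hf).2).symm),
    Finset.sum_comm, Finset.sum_congr rfl step2,
    Finset.sum_const, Finset.card_univ, Fintype.card_prod, Fintype.card_fin, Fintype.card_fin,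
    smul_eq_mul, mul_assoc]

end PhiAux

theorem phi_succ_arg (m n : ℕ) (hm : 2 ≤ m) (hn : 2 * m ≤ n) :
    phi m (n + 1) = m * phi m n + m * n * phi (m - 1) (n - 1) := by
  obtain ⟨M, rfl⟩ : ∃ M, m = M + 1 := ⟨m - 1, by omega⟩
  obtain ⟨N, rfl⟩ : ∃ N, n = N + 1 := ⟨n - 1, by omega⟩
  simp only [Nat.add_sub_cancel]
  rw [PhiAux.phi_def (M + 1) (N + 1 + 1)]
  have hsplit : ∀ f : Fin (N + 1 + 1) → Fin (M + 1),
      PhiAux.Valid f ↔ ((PhiAux.Valid f ∧ 3 ≤ PhiAux.fc f (f (Fin.last (N + 1)))) ∨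
        (PhiAux.Valid f ∧ PhiAux.fc f (f (Fin.last (N + 1))) = 2)) := by
    intro f
    constructor
    · intro h
      have h2 := h (f (Fin.last (N + 1)))
      by_cases h3 : 3 ≤ PhiAux.fc f (f (Fin.last (N + 1)))
      · exact Or.inl ⟨h, h3⟩
      · exact Or.inr ⟨h, by omega⟩
    · rintro (⟨h, -⟩ | ⟨h, -⟩) <;> exact h
  have hdisj : Disjoint
      (fun f : Fin (N + 1 + 1) → Fin (M + 1) =>
        PhiAux.Valid f ∧ 3 ≤ PhiAux.fc f (f (Fin.last (N + 1))))
      (fun f : Fin (N + 1 + 1) → Fin (M + 1) =>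
        PhiAux.Valid f ∧ PhiAux.fc f (f (Fin.last (N + 1))) = 2) := by
    rw [Pi.disjoint_iff]
    intro f
    rw [Prop.disjoint_iff]
    rintro ⟨⟨-, h3⟩, ⟨-, h2⟩⟩
    omega
  rw [Fintype.card_congr (Equiv.subtypeEquivRight hsplit),
    Fintype.card_subtype_or_disjoint _ _ hdisj,
    PhiAux.cardA, PhiAux.cardB, mul_assoc]
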